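/- There exist universal constants c₁, c₂ > 0 such that for all n ≥ 1, all ε with 1/n ≤ ε ≤ 1/2, every subset A ⊆ L_mid, and every x* ∈ L_mid: c₁·(score↓(x*,A) + score↑(x*,A))/√(n·ln(1/ε)) ≤ Pr_{(x,y) ← D′}[y ∈ A | x = x*] ≤ c₂·(score↓(x*,A) + score↑(x*,A))/√(n·ln(1/ε)). -/

import Mathlib

open Finset

/-- The Hamming weight `‖x‖₁` of `x ∈ {0,1}^n`. -/
def wt {n : ℕ} (x : Fin n → Bool) : ℕ :=
  (Finset.univ.filter (fun i => x i = true)).card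

/-- The Hamming distance `‖x − y‖₁`. -/
def hamm {n : ℕ} (x y : Fin n → Bool) : ℕ :=
  (Finset.univ.filter (fun i => x i ≠ y i)).card

/-- The parameter `d = d(n,ε) = 2⌈√(2n·ln(100/ε))⌉`. -/
noncomputable def dPar (n : ℕ) (ε : ℝ) : ℕ :=
  2 * ⌈Real.sqrt (2 * n * Real.log (100 / ε))⌉₊

open Classical in
/-- The middle layers `L_mid = {x : (n−d)/2 ≤ ‖x‖₁ ≤ (n+d)/2}`. -/
noncomputable def Lmid (n : ℕ) (ε : ℝ) : Finset (Fin n → Bool) :=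
  Finset.univ.filter (fun x =>
    ((n : ℝ) - dPar n ε) / 2 ≤ (wt x : ℝ) ∧ (wt x : ℝ) ≤ ((n : ℝ) + dPar n ε) / 2)

/-- The `j`-th point (from the bottom) of the path from `0^n` to `1^n` determined by the
permutation `π`: its ones are exactly in positions `π(0),…,π(j−1)`. -/
def pathPoint {n : ℕ} (π : Equiv.Perm (Fin n)) (j : ℕ) : Fin n → Bool :=
  fun i => decide ((π.symm i : ℕ) < j)

/-- The indices `j` of the points of the path `π` lying in the middle layers `L_mid`. -/
noncomputable def pmidIdx (n : ℕ) (ε : ℝ) (π : Equiv.Perm (Fin n)) : Finset ℕ :=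
  (Finset.range (n + 1)).filter (fun j => pathPoint π j ∈ Lmid n ε)

/-- The paths from `0^n` to `1^n` passing through `x` (paths are parametrized by
permutations; the path of `π` passes through `x` iff its point at level `‖x‖₁` is `x`). -/
noncomputable def pathsThrough (n : ℕ) (x : Fin n → Bool) : Finset (Equiv.Perm (Fin n)) :=
  Finset.univ.filter (fun π => pathPoint π (wt x) = x)

/-- `Pr_{(x,y) ← D′}[y ∈ A ∣ x = x*]`: given `x*`, pick a path `π` uniformly among all
paths through `0^n`, `x*` and `1^n`, then pick `y` uniformly from the points of `π`
lying in `L_mid`. -/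
noncomputable def prYinA (n : ℕ) (ε : ℝ) (x : Fin n → Bool) (A : Finset (Fin n → Bool)) : ℝ :=
  (∑ π ∈ pathsThrough n x,
      (((pmidIdx n ε π).filter (fun j => pathPoint π j ∈ A)).card : ℝ) /
        ((pmidIdx n ε π).card : ℝ)) /
    ((pathsThrough n x).card : ℝ)

open Classical in
/-- `dens↓_k(x,A)`: the probability that a uniformly random `y ≼ x` with `‖x−y‖₁ = k`
lies in `A` (if `k ≤ ‖x‖₁`, and `0` otherwise). -/
noncomputable def densDown {n : ℕ} (x : Fin n → Bool) (A : Finset (Fin n → Bool)) (k : ℕ) : ℝ :=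
  if k ≤ wt x then
    ((A.filter (fun y => (∀ i, y i ≤ x i) ∧ hamm y x = k)).card : ℝ) / ((wt x).choose k : ℝ)
  else 0

open Classical in
/-- `dens↑_k(x,A)`: the probability that a uniformly random `y ≽ x` with `‖y−x‖₁ = k`
lies in `A` (if `k ≤ n − ‖x‖₁`, and `0` otherwise). -/
noncomputable def densUp {n : ℕ} (x : Fin n → Bool) (A : Finset (Fin n → Bool)) (k : ℕ) : ℝ :=
  if k ≤ n - wt x then
    ((A.filter (fun y => (∀ i, x i ≤ y i) ∧ hamm x y = k)).card : ℝ) / ((n - wt x).choose k : ℝ)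
  else 0

/-- `score↓(x,A) = Σ_{k=0}^n dens↓_k(x,A)`. -/
noncomputable def scoreDown {n : ℕ} (x : Fin n → Bool) (A : Finset (Fin n → Bool)) : ℝ :=
  ∑ k ∈ Finset.range (n + 1), densDown x A k

/-- `score↑(x,A) = Σ_{k=1}^n dens↑_k(x,A)`. -/
noncomputable def scoreUp {n : ℕ} (x : Fin n → Bool) (A : Finset (Fin n → Bool)) : ℝ :=
  ∑ k ∈ Finset.Icc 1 n, densUp x A k

lemma exists_perm_double {α : Type*} [Fintype α] [DecidableEq α]
    {s₁ s₂ t₁ t₂ : Finset α} (h₁ : s₁ ⊆ s₂) (h₂ : t₁ ⊆ t₂)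
    (hc₁ : s₁.card = t₁.card) (hc₂ : s₂.card = t₂.card) :
    ∃ σ : Equiv.Perm α, (∀ a, σ a ∈ t₁ ↔ a ∈ s₁) ∧ (∀ a, σ a ∈ t₂ ↔ a ∈ s₂) := by
  have hcd : (s₂ \ s₁).card = (t₂ \ t₁).card := by
    rw [Finset.card_sdiff_of_subset h₁, Finset.card_sdiff_of_subset h₂, hc₁, hc₂]
  have hcc : (s₂ᶜ).card = (t₂ᶜ).card := by
    rw [Finset.card_compl, Finset.card_compl, hc₂]
  let e₁ := Finset.equivOfCardEq hc₁
  let e₂ := Finset.equivOfCardEq hcd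
  let e₃ := Finset.equivOfCardEq hcc
  let f : α → α := fun a =>
    if h : a ∈ s₁ then (e₁ ⟨a, h⟩ : α)
    else if h' : a ∈ s₂ then (e₂ ⟨a, Finset.mem_sdiff.2 ⟨h', h⟩⟩ : α)
    else (e₃ ⟨a, Finset.mem_compl.2 h'⟩ : α)
  have hmem : ∀ a, (a ∈ s₁ → f a ∈ t₁) ∧ (a ∈ s₂ → a ∉ s₁ → f a ∈ t₂ \ t₁)
      ∧ (a ∉ s₂ → f a ∈ t₂ᶜ) := by
    intro a
    refine ⟨fun h => ?_, fun h' h'' => ?_, fun h => ?_⟩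
    · simp only [f, dif_pos h]; exact (e₁ ⟨a, h⟩).2
    · simp only [f, dif_neg h'', dif_pos h']
      exact (e₂ ⟨a, Finset.mem_sdiff.2 ⟨h', h''⟩⟩).2
    · have h'' : a ∉ s₁ := fun hh => h (h₁ hh)
      simp only [f, dif_neg h'', dif_neg h]
      exact (e₃ ⟨a, Finset.mem_compl.2 h⟩).2
  have hblk : ∀ a, ((f a ∈ t₁) ↔ a ∈ s₁) ∧ ((f a ∈ t₂) ↔ a ∈ s₂) := by
    intro a
    by_cases ha1 : a ∈ s₁
    · have := (hmem a).1 ha1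
      exact ⟨⟨fun _ => ha1, fun _ => this⟩, ⟨fun _ => h₁ ha1, fun _ => h₂ this⟩⟩
    · by_cases ha2 : a ∈ s₂
      · have := Finset.mem_sdiff.1 ((hmem a).2.1 ha2 ha1)
        exact ⟨⟨fun h => absurd h this.2, fun h => absurd h ha1⟩,
          ⟨fun _ => ha2, fun _ => this.1⟩⟩
      · have := Finset.mem_compl.1 ((hmem a).2.2 ha2)
        exact ⟨⟨fun h => absurd (h₂ h) this, fun h => absurd h ha1⟩,
          ⟨fun h => absurd h this, fun h => absurd h ha2⟩⟩
  have hinj : Function.Injective f := by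
    intro a b hab
    have hb1 : (a ∈ s₁) ↔ (b ∈ s₁) := by
      rw [← (hblk a).1, ← (hblk b).1, hab]
    have hb2 : (a ∈ s₂) ↔ (b ∈ s₂) := by
      rw [← (hblk a).2, ← (hblk b).2, hab]
    by_cases ha1 : a ∈ s₁
    · have hb1' := hb1.1 ha1
      have := hab
      simp only [f, dif_pos ha1, dif_pos hb1'] at this
      exact congrArg Subtype.val (e₁.injective (Subtype.ext this))
    · have hb1' := fun h => ha1 (hb1.2 h)
      by_cases ha2 : a ∈ s₂
      · have hb2' := hb2.1 ha2
        have := hab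
        simp only [f, dif_neg ha1, dif_pos ha2, dif_neg hb1', dif_pos hb2'] at this
        exact congrArg Subtype.val (e₂.injective (Subtype.ext this))
      · have hb2' := fun h => ha2 (hb2.2 h)
        have := hab
        simp only [f, dif_neg ha1, dif_neg ha2, dif_neg hb1', dif_neg hb2'] at this
        exact congrArg Subtype.val (e₃.injective (Subtype.ext this))
  refine ⟨Equiv.ofBijective f (Finite.injective_iff_bijective.1 hinj), fun a => (hblk a).1,
    fun a => (hblk a).2⟩


def supp {n : ℕ} (x : Fin n → Bool) : Finset (Fin n) :=
  Finset.univ.filter (fun i => x i = true)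

lemma wt_def {n : ℕ} (x : Fin n → Bool) : wt x = (supp x).card := rfl

lemma mem_supp {n : ℕ} {x : Fin n → Bool} {i : Fin n} : i ∈ supp x ↔ x i = true := by
  simp [supp]

lemma wt_le {n : ℕ} (x : Fin n → Bool) : wt x ≤ n := by
  rw [wt_def]
  simpa using Finset.card_le_card (Finset.subset_univ (supp x))

lemma card_fin_lt {n : ℕ} (j : ℕ) (hj : j ≤ n) :
    (Finset.univ.filter (fun i : Fin n => (i : ℕ) < j)).card = j := by
  rw [show (Finset.univ.filter (fun i : Fin n => (i : ℕ) < j))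
      = Finset.map (Fin.castLEEmb hj) Finset.univ by
    ext i
    simp only [Finset.mem_filter, Finset.mem_univ, true_and, Finset.mem_map,
      Fin.castLEEmb, Finset.mem_univ]
    constructor
    · intro h; exact ⟨⟨i, h⟩, by simp [Fin.castLE]⟩
    · rintro ⟨k, -, rfl⟩; simpa using k.2]
  simp

lemma wt_pathPoint {n : ℕ} (π : Equiv.Perm (Fin n)) (j : ℕ) (hj : j ≤ n) :
    wt (pathPoint π j) = j := by
  have key : (Finset.univ.filter (fun i => pathPoint π j i = true)).card
      = (Finset.univ.filter (fun i : Fin n => (i : ℕ) < j)).card := by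
    apply Finset.card_nbij' (fun i => π.symm i) (fun i => π i)
    · intro i hi
      simp only [Finset.mem_coe, Finset.mem_filter, Finset.mem_univ, true_and, pathPoint] at hi ⊢
      simpa using hi
    · intro i hi
      simp only [Finset.mem_coe, Finset.mem_filter, Finset.mem_univ, true_and, pathPoint] at hi ⊢
      simpa using hi
    · intro i _; simp
    · intro i _; simp
  rw [wt, key, card_fin_lt j hj]

lemma pathPoint_le {n : ℕ} (π : Equiv.Perm (Fin n)) {j k : ℕ} (h : j ≤ k) (i : Fin n) :
    pathPoint π j i ≤ pathPoint π k i := by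
  simp only [pathPoint]
  by_cases hh : (π.symm i : ℕ) < j
  · simp [hh, lt_of_lt_of_le hh h]
  · simp [hh]

lemma supp_subset_of_le {n : ℕ} {x y : Fin n → Bool} (h : ∀ i, x i ≤ y i) :
    supp x ⊆ supp y := by
  intro i hi
  rw [mem_supp] at hi ⊢
  have := h i; rw [hi] at this; exact Bool.eq_true_of_true_le this

lemma hamm_of_le {n : ℕ} {x y : Fin n → Bool} (h : ∀ i, x i ≤ y i) :
    hamm x y = wt y - wt x := by
  rw [hamm, wt_def, wt_def, ← Finset.card_sdiff_of_subset (supp_subset_of_le h)]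
  congr 1
  ext i
  simp only [Finset.mem_filter, Finset.mem_univ, true_and, Finset.mem_sdiff, mem_supp]
  have := h i
  cases hx : x i <;> cases hy : y i <;> simp_all [Bool.le_iff_imp]

lemma wt_le_of_le {n : ℕ} {x y : Fin n → Bool} (h : ∀ i, x i ≤ y i) : wt x ≤ wt y := by
  rw [wt_def, wt_def]; exact Finset.card_le_card (supp_subset_of_le h)

lemma pathPoint_mul {n : ℕ} (σ π : Equiv.Perm (Fin n)) (k : ℕ) (i : Fin n) :
    pathPoint (σ * π) k i = pathPoint π k (σ.symm i) := rfl

lemma card_Ydown {n : ℕ} (x : Fin n → Bool) (j : ℕ) (hj : j ≤ wt x) :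
    (Finset.univ.filter (fun y : Fin n → Bool => (∀ i, y i ≤ x i) ∧ wt y = j)).card
      = (wt x).choose j := by
  rw [show (wt x).choose j = (supp x).card.choose j from rfl,
    ← Finset.card_powersetCard j (supp x)]
  apply Finset.card_nbij' (fun y => supp y) (fun s i => decide (i ∈ s))
  · intro y hy
    simp only [Finset.mem_coe, Finset.mem_filter, Finset.mem_univ, true_and] at hy
    rw [Finset.mem_coe, Finset.mem_powersetCard]
    exact ⟨supp_subset_of_le hy.1, by rw [← wt_def, hy.2]⟩
  · intro s hs
    rw [Finset.mem_coe, Finset.mem_powersetCard] at hs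
    simp only [Finset.mem_coe, Finset.mem_filter, Finset.mem_univ, true_and]
    constructor
    · intro i
      by_cases h : i ∈ s
      · have := mem_supp.1 (hs.1 h); simp [h, this]
      · simp [h]
    · rw [← hs.2, wt_def]
      congr 1
      ext i; simp [mem_supp]
  · intro y _
    ext i; simp [mem_supp]
  · intro s _
    ext i; simp [mem_supp]

lemma card_Yup {n : ℕ} (x : Fin n → Bool) (j : ℕ) (hj : wt x ≤ j) (hjn : j ≤ n) :
    (Finset.univ.filter (fun y : Fin n → Bool => (∀ i, x i ≤ y i) ∧ wt y = j)).card
      = (n - wt x).choose (j - wt x) := by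
  have hcompl : ((supp x)ᶜ : Finset (Fin n)).card = n - wt x := by
    rw [Finset.card_compl, wt_def]; simp
  rw [← hcompl, ← Finset.card_powersetCard (j - wt x) ((supp x)ᶜ)]
  apply Finset.card_nbij' (fun y => supp y \ supp x) (fun s i => x i || decide (i ∈ s))
  · intro y hy
    simp only [Finset.mem_coe, Finset.mem_filter, Finset.mem_univ, true_and] at hy
    rw [Finset.mem_coe, Finset.mem_powersetCard]
    refine ⟨fun i hi => ?_, ?_⟩
    · rw [Finset.mem_sdiff] at hi; simpa using hi.2
    · rw [Finset.card_sdiff_of_subset (supp_subset_of_le hy.1), ← wt_def, ← wt_def, hy.2]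
  · intro s hs
    rw [Finset.mem_coe, Finset.mem_powersetCard] at hs
    simp only [Finset.mem_coe, Finset.mem_filter, Finset.mem_univ, true_and]
    have hdisj : Disjoint (supp x) s := by
      rw [Finset.disjoint_right]
      intro i hi
      exact Finset.mem_compl.1 (hs.1 hi)
    constructor
    · intro i; cases x i <;> simp
    · rw [wt_def]
      have : supp (fun i => x i || decide (i ∈ s)) = supp x ∪ s := by
        ext i; simp [mem_supp]
      rw [this, Finset.card_union_of_disjoint hdisj, ← wt_def, hs.2]
      omega
  · intro y hy
    simp only [Finset.mem_coe, Finset.mem_filter, Finset.mem_univ, true_and] at hy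
    ext i
    simp only [Finset.mem_sdiff, mem_supp]
    have := hy.1 i
    cases hx : x i <;> cases hyi : y i <;> simp_all [Bool.le_iff_imp]
  · intro s hs
    rw [Finset.mem_coe, Finset.mem_powersetCard] at hs
    ext i
    simp only [Finset.mem_sdiff, mem_supp, Bool.or_eq_true, decide_eq_true_eq]
    constructor
    · rintro ⟨h1 | h1, h2⟩
      · exact absurd h1 h2
      · exact h1
    · intro h
      have := hs.1 h
      simp only [Finset.mem_compl, mem_supp] at this
      exact ⟨Or.inr h, fun hh => this hh⟩

lemma pathPoint_mul_eq {n : ℕ} {σ π : Equiv.Perm (Fin n)} {k : ℕ} {z z' : Fin n → Bool}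
    (hσ : ∀ a, σ a ∈ supp z' ↔ a ∈ supp z) (h : pathPoint π k = z) :
    pathPoint (σ * π) k = z' := by
  funext i
  rw [pathPoint_mul, h]
  have := hσ (σ.symm i)
  rw [Equiv.apply_symm_apply] at this
  rw [mem_supp, mem_supp] at this
  cases hz : z (σ.symm i) <;> cases hz' : z' i <;> simp_all

lemma count_level {n : ℕ} (x : Fin n → Bool) (A : Finset (Fin n → Bool)) (j : ℕ)
    (Q : (Fin n → Bool) → Prop) [DecidablePred Q]
    (hmemY : ∀ π : Equiv.Perm (Fin n), pathPoint π (wt x) = x → Q (pathPoint π j))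
    (hex : ∀ y y', Q y → Q y' →
      ∃ σ : Equiv.Perm (Fin n), (∀ a, σ a ∈ supp y' ↔ a ∈ supp y) ∧
        (∀ a, σ a ∈ supp x ↔ a ∈ supp x)) :
    ((pathsThrough n x).filter (fun π => pathPoint π j ∈ A)).card
        * (Finset.univ.filter (fun y => Q y)).card
      = (pathsThrough n x).card * (A.filter (fun y => Q y)).card := by
  classical
  set P := pathsThrough n x with hP
  set Y := Finset.univ.filter (fun y => Q y) with hY
  set N : (Fin n → Bool) → ℕ := fun y => (P.filter (fun π => pathPoint π j = y)).card with hN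
  have hmemP : ∀ π, π ∈ P ↔ pathPoint π (wt x) = x := by
    intro π; simp [hP, pathsThrough]
  -- constancy of N on Y
  have hconst : ∀ y ∈ Y, ∀ y' ∈ Y, N y = N y' := by
    intro y hy y' hy'
    rw [hY, Finset.mem_filter] at hy hy'
    obtain ⟨σ, hσ₁, hσ₂⟩ := hex y y' hy.2 hy'.2
    have hσ₁' : ∀ a, σ⁻¹ a ∈ supp y ↔ a ∈ supp y' := by
      intro a
      have := hσ₁ (σ⁻¹ a)
      rw [show σ (σ⁻¹ a) = a from Equiv.apply_symm_apply σ a] at this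
      exact this.symm
    have hσ₂' : ∀ a, σ⁻¹ a ∈ supp x ↔ a ∈ supp x := by
      intro a
      have := hσ₂ (σ⁻¹ a)
      rw [show σ (σ⁻¹ a) = a from Equiv.apply_symm_apply σ a] at this
      exact this.symm
    apply Finset.card_nbij' (fun π => σ * π) (fun π => σ⁻¹ * π)
    · intro π hπ
      rw [Finset.mem_coe, Finset.mem_filter] at hπ ⊢
      rw [hmemP] at *
      exact ⟨pathPoint_mul_eq hσ₂ hπ.1, pathPoint_mul_eq hσ₁ hπ.2⟩
    · intro π hπ
      rw [Finset.mem_coe, Finset.mem_filter] at hπ ⊢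
      rw [hmemP] at *
      exact ⟨pathPoint_mul_eq hσ₂' hπ.1, pathPoint_mul_eq hσ₁' hπ.2⟩
    · intro π _; group
    · intro π _; group
  -- total mass
  have htot : P.card = ∑ y ∈ Y, N y := by
    apply Finset.card_eq_sum_card_fiberwise (f := fun π => pathPoint π j)
    intro π hπ
    rw [hY, Finset.mem_coe, Finset.mem_filter]
    exact ⟨Finset.mem_univ _, hmemY π ((hmemP π).1 hπ)⟩
  -- mass in A
  have hA : (P.filter (fun π => pathPoint π j ∈ A)).card = ∑ y ∈ A.filter Q, N y := by
    rw [Finset.card_eq_sum_card_fiberwise (f := fun π => pathPoint π j)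
      (t := A.filter Q) (fun π hπ => by
        rw [Finset.mem_coe, Finset.mem_filter] at hπ ⊢
        exact ⟨hπ.2, hmemY π ((hmemP π).1 hπ.1)⟩)]
    apply Finset.sum_congr rfl
    intro y hy
    rw [hN]
    congr 1
    rw [Finset.filter_filter]
    apply Finset.filter_congr
    intro π _
    rw [Finset.mem_filter] at hy
    constructor
    · rintro ⟨-, h⟩; exact h
    · intro h; exact ⟨by rw [h]; exact hy.1, h⟩
  by_cases hYe : Y.Nonempty
  · obtain ⟨y₀, hy₀⟩ := hYe
    have h1 : ∑ y ∈ Y, N y = Y.card * N y₀ := by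
      rw [Finset.sum_congr rfl (fun y hy => hconst y hy y₀ hy₀)]
      simp [mul_comm]
    have h2 : ∑ y ∈ A.filter Q, N y = (A.filter Q).card * N y₀ := by
      rw [Finset.sum_congr rfl (fun y hy => hconst y (by
        rw [Finset.mem_filter] at hy
        rw [hY, Finset.mem_filter]
        exact ⟨Finset.mem_univ _, hy.2⟩) y₀ hy₀)]
      simp [mul_comm]
    rw [hA, h2, htot, h1]
    ring
  · rw [Finset.not_nonempty_iff_eq_empty] at hYe
    have hAe : A.filter Q = ∅ := by
      rw [Finset.eq_empty_iff_forall_notMem]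
      intro y hy
      rw [Finset.mem_filter] at hy
      have : y ∈ Y := by rw [hY, Finset.mem_filter]; exact ⟨Finset.mem_univ _, hy.2⟩
      rw [hYe] at this; exact absurd this (Finset.notMem_empty y)
    rw [hYe, hAe]
    simp

lemma pathsThrough_nonempty {n : ℕ} (x : Fin n → Bool) : (pathsThrough n x).Nonempty := by
  classical
  have hc : (Finset.univ.filter (fun i : Fin n => (i : ℕ) < wt x)).card = (supp x).card := by
    rw [card_fin_lt _ (wt_le x), wt_def]
  obtain ⟨σ, hσ, -⟩ := exists_perm_double (le_refl (Finset.univ.filter (fun i : Fin n => (i : ℕ) < wt x)))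
    (le_refl (supp x)) hc hc
  refine ⟨σ, ?_⟩
  rw [pathsThrough, Finset.mem_filter]
  refine ⟨Finset.mem_univ _, ?_⟩
  funext i
  have := hσ (σ.symm i)
  rw [Equiv.apply_symm_apply] at this
  rw [mem_supp, Finset.mem_filter] at this
  simp only [Finset.mem_univ, true_and] at this
  rw [pathPoint]
  cases hx : x i <;> simp [hx] at this <;> simp [this]

lemma count_down {n : ℕ} (x : Fin n → Bool) (A : Finset (Fin n → Bool)) (j : ℕ)
    (hj : j ≤ wt x) :
    ((pathsThrough n x).filter (fun π => pathPoint π j ∈ A)).card * (wt x).choose j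
      = (pathsThrough n x).card
          * (A.filter (fun y => (∀ i, y i ≤ x i) ∧ wt y = j)).card := by
  rw [← card_Ydown x j hj]
  apply count_level
  · intro π hπ
    constructor
    · intro i
      calc pathPoint π j i ≤ pathPoint π (wt x) i := pathPoint_le π hj i
        _ = x i := by rw [hπ]
    · exact wt_pathPoint π j (le_trans hj (wt_le x))
  · rintro y y' ⟨hy1, hy2⟩ ⟨hy1', hy2'⟩
    exact exists_perm_double (supp_subset_of_le hy1) (supp_subset_of_le hy1')
      (by rw [← wt_def, ← wt_def, hy2, hy2'])
      rfl

lemma count_up {n : ℕ} (x : Fin n → Bool) (A : Finset (Fin n → Bool)) (j : ℕ)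
    (hj : wt x ≤ j) (hjn : j ≤ n) :
    ((pathsThrough n x).filter (fun π => pathPoint π j ∈ A)).card
        * (n - wt x).choose (j - wt x)
      = (pathsThrough n x).card
          * (A.filter (fun y => (∀ i, x i ≤ y i) ∧ wt y = j)).card := by
  rw [← card_Yup x j hj hjn]
  apply count_level
  · intro π hπ
    constructor
    · intro i
      calc x i = pathPoint π (wt x) i := by rw [hπ]
        _ ≤ pathPoint π j i := pathPoint_le π hj i
    · exact wt_pathPoint π j hjn
  · rintro y y' ⟨hy1, hy2⟩ ⟨hy1', hy2'⟩
    obtain ⟨σ, h1, h2⟩ := exists_perm_double (supp_subset_of_le hy1) (supp_subset_of_le hy1')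
      rfl
      (by rw [← wt_def, ← wt_def, hy2, hy2'])
    exact ⟨σ, h2, h1⟩


open Classical in
lemma densDown_eq {n : ℕ} (x : Fin n → Bool) (A : Finset (Fin n → Bool)) (j : ℕ)
    (hj : j ≤ wt x) :
    densDown x A (wt x - j)
      = ((A.filter (fun y => (∀ i, y i ≤ x i) ∧ wt y = j)).card : ℝ)
          / ((wt x).choose j : ℝ) := by
  rw [densDown, if_pos (Nat.sub_le _ _), Nat.choose_symm hj]
  congr 2
  refine congrArg Finset.card (Finset.filter_congr ?_)
  intro y _
  constructor
  · rintro ⟨h1, h2⟩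
    refine ⟨h1, ?_⟩
    rw [hamm_of_le h1] at h2
    have := wt_le_of_le h1
    omega
  · rintro ⟨h1, h2⟩
    refine ⟨h1, ?_⟩
    rw [hamm_of_le h1, h2]

open Classical in
lemma densUp_eq {n : ℕ} (x : Fin n → Bool) (A : Finset (Fin n → Bool)) (j : ℕ)
    (hj : wt x ≤ j) (hjn : j ≤ n) :
    densUp x A (j - wt x)
      = ((A.filter (fun y => (∀ i, x i ≤ y i) ∧ wt y = j)).card : ℝ)
          / ((n - wt x).choose (j - wt x) : ℝ) := by
  rw [densUp, if_pos (by omega)]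
  congr 2
  refine congrArg Finset.card (Finset.filter_congr ?_)
  intro y _
  constructor
  · rintro ⟨h1, h2⟩
    refine ⟨h1, ?_⟩
    rw [hamm_of_le h1] at h2
    have := wt_le_of_le h1
    have := wt_le y
    omega
  · rintro ⟨h1, h2⟩
    refine ⟨h1, ?_⟩
    rw [hamm_of_le h1, h2]

lemma ratio_down {n : ℕ} (x : Fin n → Bool) (A : Finset (Fin n → Bool)) (j : ℕ)
    (hj : j ≤ wt x) :
    (((pathsThrough n x).filter (fun π => pathPoint π j ∈ A)).card : ℝ)
      = ((pathsThrough n x).card : ℝ) * densDown x A (wt x - j) := by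
  classical
  have h := count_down x A j hj
  have hC : (0:ℝ) < ((wt x).choose j : ℝ) := by
    exact Nat.cast_pos.mpr (Nat.choose_pos hj)
  rw [densDown_eq x A j hj, ← mul_div_assoc, eq_div_iff hC.ne']
  exact_mod_cast h

lemma ratio_up {n : ℕ} (x : Fin n → Bool) (A : Finset (Fin n → Bool)) (j : ℕ)
    (hj : wt x ≤ j) (hjn : j ≤ n) :
    (((pathsThrough n x).filter (fun π => pathPoint π j ∈ A)).card : ℝ)
      = ((pathsThrough n x).card : ℝ) * densUp x A (j - wt x) := by
  classical
  have h := count_up x A j hj hjn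
  have hle : j - wt x ≤ n - wt x := Nat.sub_le_sub_right hjn _
  have hC : (0:ℝ) < (((n - wt x).choose (j - wt x)) : ℝ) := by
    exact Nat.cast_pos.mpr (Nat.choose_pos hle)
  rw [densUp_eq x A j hj hjn, ← mul_div_assoc, eq_div_iff hC.ne']
  exact_mod_cast h


noncomputable def midJ (n : ℕ) (ε : ℝ) : Finset ℕ :=
  (Finset.range (n+1)).filter (fun j =>
    ((n : ℝ) - dPar n ε) / 2 ≤ (j : ℝ) ∧ (j : ℝ) ≤ ((n : ℝ) + dPar n ε) / 2)

lemma pmidIdx_eq {n : ℕ} (ε : ℝ) (π : Equiv.Perm (Fin n)) : pmidIdx n ε π = midJ n ε := by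
  classical
  ext j
  simp only [pmidIdx, midJ, Finset.mem_filter, Finset.mem_range, Lmid, Finset.mem_univ,
    true_and]
  constructor
  · rintro ⟨h1, h2, h3⟩
    rw [wt_pathPoint π j (by omega)] at h2 h3
    exact ⟨h1, h2, h3⟩
  · rintro ⟨h1, h2, h3⟩
    refine ⟨h1, ?_, ?_⟩ <;> rw [wt_pathPoint π j (by omega)]
    · exact h2
    · exact h3

lemma wt_mem_midJ {n : ℕ} {ε : ℝ} {y : Fin n → Bool} (hy : y ∈ Lmid n ε) :
    wt y ∈ midJ n ε := by
  classical
  simp only [Lmid, Finset.mem_filter, Finset.mem_univ, true_and] at hy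
  simp only [midJ, Finset.mem_filter, Finset.mem_range]
  exact ⟨by have := wt_le y; omega, hy.1, hy.2⟩

lemma filter_wt_empty {n : ℕ} {ε : ℝ} {A : Finset (Fin n → Bool)} (hA : A ⊆ Lmid n ε)
    {j : ℕ} (hjJ : j ∉ midJ n ε) (p : (Fin n → Bool) → Prop) [DecidablePred p] :
    A.filter (fun y => p y ∧ wt y = j) = ∅ := by
  rw [Finset.eq_empty_iff_forall_notMem]
  intro y hy
  rw [Finset.mem_filter] at hy
  have := wt_mem_midJ (hA hy.1)
  rw [hy.2.2] at this
  exact hjJ this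

lemma densDown_zero {n : ℕ} (x : Fin n → Bool) (A : Finset (Fin n → Bool)) {k : ℕ}
    (hk : wt x < k) : densDown x A k = 0 := by
  rw [densDown, if_neg (by omega)]

lemma densUp_zero {n : ℕ} (x : Fin n → Bool) (A : Finset (Fin n → Bool)) {k : ℕ}
    (hk : n - wt x < k) : densUp x A k = 0 := by
  rw [densUp, if_neg (by omega)]

lemma sum_dens_eq {n : ℕ} (x : Fin n → Bool) (A : Finset (Fin n → Bool)) (hxn : wt x ≤ n) :
    ∑ j ∈ Finset.range (n+1),
        (if j ≤ wt x then densDown x A (wt x - j) else densUp x A (j - wt x))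
      = scoreDown x A + scoreUp x A := by
  set w := wt x with hw
  rw [Finset.range_eq_Ico,
    ← Finset.sum_Ico_consecutive _ (Nat.zero_le (w+1)) (by omega : w + 1 ≤ n + 1)]
  have hdown : ∑ j ∈ Finset.Ico 0 (w+1),
      (if j ≤ w then densDown x A (w - j) else densUp x A (j - w)) = scoreDown x A := by
    rw [← Finset.range_eq_Ico]
    rw [Finset.sum_congr rfl (fun j hj => if_pos (by
      rw [Finset.mem_range] at hj; omega))]
    have hrefl := Finset.sum_range_reflect (fun k => densDown x A k) (w+1)
    have : ∑ j ∈ Finset.range (w+1), densDown x A (w - j)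
        = ∑ k ∈ Finset.range (w+1), densDown x A k := by
      rw [← hrefl]
      apply Finset.sum_congr rfl
      intro j hj
      congr 1
    rw [this, scoreDown]
    apply Finset.sum_subset
    · intro k hk
      rw [Finset.mem_range] at hk ⊢
      omega
    · intro k _ hk
      rw [Finset.mem_range] at hk
      exact densDown_zero x A (by omega)
  have hup : ∑ j ∈ Finset.Ico (w+1) (n+1),
      (if j ≤ w then densDown x A (w - j) else densUp x A (j - w)) = scoreUp x A := by
    rw [Finset.sum_congr rfl (fun j hj => if_neg (by
      rw [Finset.mem_Ico] at hj; omega))]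
    rw [Finset.sum_Ico_eq_sum_range]
    have h1 : ∑ i ∈ Finset.range (n + 1 - (w + 1)), densUp x A (w + 1 + i - w)
        = ∑ i ∈ Finset.range (n - w), densUp x A (1 + i) := by
      apply Finset.sum_congr (by congr 1; omega)
      intro i _
      congr 1
      omega
    rw [h1, scoreUp]
    have h2 : Finset.Icc 1 n = Finset.Ico 1 (n+1) := by
      rw [Finset.Ico_add_one_right_eq_Icc]
    rw [h2, Finset.sum_Ico_eq_sum_range]
    apply Finset.sum_subset
    · intro k hk
      rw [Finset.mem_range] at hk ⊢
      omega
    · intro k hk1 hk2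
      rw [Finset.mem_range] at hk1 hk2
      exact densUp_zero x A (by omega)
  rw [hdown, hup]

lemma prYinA_eq {n : ℕ} {ε : ℝ} (A : Finset (Fin n → Bool)) (hA : A ⊆ Lmid n ε)
    (x : Fin n → Bool) (hx : x ∈ Lmid n ε) :
    prYinA n ε x A = (scoreDown x A + scoreUp x A) / ((midJ n ε).card : ℝ) := by
  classical
  set w := wt x with hw
  set P := pathsThrough n x with hP
  set J := midJ n ε with hJ
  have hPc : 0 < P.card := Finset.card_pos.mpr (pathsThrough_nonempty x)
  have hmJ : w ∈ J := wt_mem_midJ hx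
  have hJc : 0 < J.card := Finset.card_pos.mpr ⟨w, hmJ⟩
  have hwn : w ≤ n := wt_le x
  -- swap the double sum (in ℕ)
  have hswap : ∑ π ∈ P, ((J.filter (fun j => pathPoint π j ∈ A)).card)
      = ∑ j ∈ J, ((P.filter (fun π => pathPoint π j ∈ A)).card) := by
    have lhs : ∀ π, ((J.filter (fun j => pathPoint π j ∈ A)).card)
        = ∑ j ∈ J, (if pathPoint π j ∈ A then 1 else 0) := by
      intro π; rw [Finset.card_filter]
    have rhs : ∀ j, ((P.filter (fun π => pathPoint π j ∈ A)).card)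
        = ∑ π ∈ P, (if pathPoint π j ∈ A then 1 else 0) := by
      intro j; rw [Finset.card_filter]
    rw [Finset.sum_congr rfl (fun π _ => lhs π), Finset.sum_congr rfl (fun j _ => rhs j)]
    exact Finset.sum_comm
  -- the inner ratios
  have hratio : ∀ j ∈ J, ((P.filter (fun π => pathPoint π j ∈ A)).card : ℝ)
      = (P.card : ℝ) * (if j ≤ w then densDown x A (w - j) else densUp x A (j - w)) := by
    intro j hj
    have hjn : j ≤ n := by
      rw [hJ, midJ, Finset.mem_filter, Finset.mem_range] at hj
      omega
    by_cases hjw : j ≤ w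
    · rw [if_pos hjw]; exact ratio_down x A j hjw
    · rw [if_neg hjw]; exact ratio_up x A j (by omega) hjn
  -- extend the dens sum from J to range (n+1)
  have hext : ∑ j ∈ J, (if j ≤ w then densDown x A (w - j) else densUp x A (j - w))
      = ∑ j ∈ Finset.range (n+1),
          (if j ≤ w then densDown x A (w - j) else densUp x A (j - w)) := by
    apply Finset.sum_subset
    · intro j hj
      rw [hJ, midJ, Finset.mem_filter] at hj
      exact hj.1
    · intro j hj1 hj2
      by_cases hjw : j ≤ w
      · rw [if_pos hjw]
        rw [densDown_eq x A j hjw, filter_wt_empty hA hj2]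
        simp
      · rw [if_neg hjw]
        rw [densUp_eq x A j (by omega) (by rw [Finset.mem_range] at hj1; omega),
          filter_wt_empty hA hj2]
        simp
  -- putting it together
  rw [prYinA]
  have hpm : ∀ π : Equiv.Perm (Fin n), pmidIdx n ε π = J := fun π => pmidIdx_eq ε π
  have step1 : ∑ π ∈ P,
      (((pmidIdx n ε π).filter (fun j => pathPoint π j ∈ A)).card : ℝ) /
        ((pmidIdx n ε π).card : ℝ)
      = (∑ j ∈ J, ((P.filter (fun π => pathPoint π j ∈ A)).card : ℝ)) / (J.card : ℝ) := by
    rw [Finset.sum_congr rfl (fun π _ => by rw [hpm π])]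
    rw [← Finset.sum_div]
    congr 1
    rw [← Nat.cast_sum, ← Nat.cast_sum, hswap]
  rw [step1]
  rw [Finset.sum_congr rfl hratio, ← Finset.mul_sum, hext, sum_dens_eq x A hwn]
  have hPne : ((P.card : ℝ)) ≠ 0 := Nat.cast_ne_zero.mpr hPc.ne'
  have hJne : ((J.card : ℝ)) ≠ 0 := Nat.cast_ne_zero.mpr hJc.ne'
  rw [← hP]
  field_simp


lemma densDown_nonneg {n : ℕ} (x : Fin n → Bool) (A : Finset (Fin n → Bool)) (k : ℕ) :
    0 ≤ densDown x A k := by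
  rw [densDown]
  split
  · positivity
  · exact le_refl 0

lemma densUp_nonneg {n : ℕ} (x : Fin n → Bool) (A : Finset (Fin n → Bool)) (k : ℕ) :
    0 ≤ densUp x A k := by
  rw [densUp]
  split
  · positivity
  · exact le_refl 0

lemma score_nonneg {n : ℕ} (x : Fin n → Bool) (A : Finset (Fin n → Bool)) :
    0 ≤ scoreDown x A + scoreUp x A := by
  have h1 : 0 ≤ scoreDown x A := Finset.sum_nonneg (fun k _ => densDown_nonneg x A k)
  have h2 : 0 ≤ scoreUp x A := Finset.sum_nonneg (fun k _ => densUp_nonneg x A k)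
  linarith

lemma midJ_card_le {n : ℕ} (ε : ℝ) : (midJ n ε).card ≤ dPar n ε + 1 := by
  classical
  by_cases hJ : (midJ n ε).Nonempty
  · set a := (midJ n ε).min' hJ with ha
    have haJ : a ∈ midJ n ε := Finset.min'_mem _ hJ
    have hsub : midJ n ε ⊆ Finset.Icc a (a + dPar n ε) := by
      intro j hj
      rw [Finset.mem_Icc]
      refine ⟨Finset.min'_le _ j hj, ?_⟩
      rw [midJ, Finset.mem_filter] at hj haJ
      have h1 := hj.2.2
      have h2 := haJ.2.1
      have : (j : ℝ) ≤ (a : ℝ) + dPar n ε := by linarith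
      exact_mod_cast this
    calc (midJ n ε).card ≤ (Finset.Icc a (a + dPar n ε)).card := Finset.card_le_card hsub
      _ = dPar n ε + 1 := by rw [Nat.card_Icc]; omega
  · rw [Finset.not_nonempty_iff_eq_empty] at hJ
    rw [hJ]
    simp

lemma midJ_eq_range {n : ℕ} {ε : ℝ} (hd : n ≤ dPar n ε) : midJ n ε = Finset.range (n+1) := by
  rw [midJ]
  rw [Finset.filter_true_of_mem]
  intro j hj
  rw [Finset.mem_range] at hj
  have hd' : (n : ℝ) ≤ (dPar n ε : ℝ) := by exact_mod_cast hd
  have hj' : (j : ℝ) ≤ (n : ℝ) := by exact_mod_cast (by omega : j ≤ n)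
  constructor
  · have : (0:ℝ) ≤ (j : ℝ) := Nat.cast_nonneg j
    linarith
  · linarith

lemma midJ_card_ge {n : ℕ} {ε : ℝ} (hd : dPar n ε < n) (hd2 : 2 ≤ dPar n ε) :
    dPar n ε ≤ (midJ n ε).card := by
  classical
  set d := dPar n ε with hdd
  set a := (n - d + 1) / 2 with haa
  have hsub : Finset.Icc a (a + d - 1) ⊆ midJ n ε := by
    intro j hj
    rw [Finset.mem_Icc] at hj
    have h2a1 : n - d ≤ 2 * a := by omega
    have h2a2 : 2 * a ≤ n - d + 1 := by omega
    have hjn : j ≤ n := by omega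
    rw [midJ, Finset.mem_filter, Finset.mem_range]
    refine ⟨by omega, ?_, ?_⟩
    · have : ((n - d : ℕ) : ℝ) ≤ 2 * j := by
        have : n - d ≤ 2 * j := by omega
        exact_mod_cast this
      rw [Nat.cast_sub hd.le] at this
      linarith
    · have : (2 * j : ℕ) ≤ n + d := by omega
      have : ((2 * j : ℕ) : ℝ) ≤ ((n + d : ℕ) : ℝ) := by exact_mod_cast this
      push_cast at this
      linarith
  calc d = (Finset.Icc a (a + d - 1)).card := by rw [Nat.card_Icc]; omega
    _ ≤ (midJ n ε).card := Finset.card_le_card hsub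
lemma final_ineq {S R M : ℝ} (hS : 0 ≤ S) (hR : 0 < R) (hM : 0 < M)
    (h1 : M ≤ 11 * R) (h2 : R ≤ M) :
    1 / 11 * S / R ≤ S / M ∧ S / M ≤ 1 * S / R := by
  constructor
  · rw [div_le_div_iff₀ hR hM]
    nlinarith
  · rw [div_le_div_iff₀ hM hR]
    nlinarith

theorem cond_prob_eq_score :
    ∃ c₁ c₂ : ℝ, 0 < c₁ ∧ 0 < c₂ ∧ ∀ n : ℕ, 1 ≤ n → ∀ ε : ℝ, 1 / (n : ℝ) ≤ ε → ε ≤ 1 / 2 →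
      ∀ A : Finset (Fin n → Bool), A ⊆ Lmid n ε → ∀ x : Fin n → Bool, x ∈ Lmid n ε →
        c₁ * (scoreDown x A + scoreUp x A) / Real.sqrt ((n : ℝ) * Real.log (1 / ε)) ≤
            prYinA n ε x A ∧
        prYinA n ε x A ≤
            c₂ * (scoreDown x A + scoreUp x A) / Real.sqrt ((n : ℝ) * Real.log (1 / ε)) := by
  refine ⟨1/11, 1, by norm_num, by norm_num, ?_⟩
  intro n hn ε hε1 hε2 A hA x hx
  have hn0 : (0:ℝ) < n := by exact_mod_cast hn
  have hε0 : 0 < ε := lt_of_lt_of_le (by positivity) hε1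
  have hn2 : (2:ℝ) ≤ n := by
    have h12 : 1/(n:ℝ) ≤ 1/2 := le_trans hε1 hε2
    rw [div_le_div_iff₀ hn0 (by norm_num : (0:ℝ) < 2)] at h12
    linarith
  set s := Real.log (1/ε) with hs
  have h2inv : (2:ℝ) ≤ 1/ε := by
    rw [le_div_iff₀ hε0]; linarith
  have hs2 : Real.log 2 ≤ s := Real.log_le_log (by norm_num) h2inv
  have hlog2 : 0 < Real.log 2 := Real.log_pos (by norm_num)
  have hs0 : 0 < s := lt_of_lt_of_le hlog2 hs2
  set t := Real.log (100/ε) with ht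
  have htsum : t = Real.log 100 + s := by
    rw [ht, hs, Real.log_div (by norm_num) hε0.ne', Real.log_div (by norm_num) hε0.ne',
      Real.log_one]
    ring
  have hlog100 : Real.log 100 ≤ 7 * Real.log 2 := by
    calc Real.log 100 ≤ Real.log 128 := Real.log_le_log (by norm_num) (by norm_num)
      _ = 7 * Real.log 2 := by
        rw [show (128:ℝ) = 2^7 by norm_num, Real.log_pow]; norm_num
  have hts : t ≤ 8 * s := by
    rw [htsum]
    have : Real.log 100 ≤ 7 * s := le_trans hlog100 (by linarith)
    linarith
  have hst : s ≤ t := by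
    rw [htsum]
    have : 0 ≤ Real.log 100 := Real.log_nonneg (by norm_num)
    linarith
  have ht0 : 0 < t := lt_of_lt_of_le hs0 hst
  set R := Real.sqrt ((n:ℝ) * s) with hR
  have hns1 : (1:ℝ) ≤ (n:ℝ) * s := by
    have h4 : (1:ℝ) ≤ Real.log 4 := by
      rw [Real.le_log_iff_exp_le (by norm_num : (0:ℝ) < 4)]
      have := Real.exp_one_lt_d9
      linarith
    have h44 : Real.log 4 = 2 * Real.log 2 := by
      rw [show (4:ℝ) = 2^2 by norm_num, Real.log_pow]; norm_num
    nlinarith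
  have hR0 : 0 < R := Real.sqrt_pos.mpr (by linarith)
  have hR1 : 1 ≤ R := Real.one_le_sqrt.mpr hns1
  set d := dPar n ε with hd
  set z := Real.sqrt (2 * (n:ℝ) * t) with hz
  have hz0 : 0 ≤ z := Real.sqrt_nonneg _
  have hzR : R ≤ z := by
    apply Real.sqrt_le_sqrt
    nlinarith
  have hz4R : z ≤ 4 * R := by
    have h1 : 2 * (n:ℝ) * t ≤ 16 * ((n:ℝ) * s) := by nlinarith
    calc z ≤ Real.sqrt (16 * ((n:ℝ) * s)) := Real.sqrt_le_sqrt h1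
      _ = 4 * R := by
        rw [Real.sqrt_mul (by norm_num : (0:ℝ) ≤ 16), hR,
          show Real.sqrt 16 = 4 by
            rw [show (16:ℝ) = 4^2 by norm_num, Real.sqrt_sq (by norm_num : (0:ℝ) ≤ 4)]]
  have hdz : 2 * z ≤ (d:ℝ) := by
    rw [hd, dPar]
    push_cast
    have := Nat.le_ceil (Real.sqrt (2 * (n:ℝ) * Real.log (100/ε)))
    rw [← ht, ← hz] at this
    linarith
  have hdub : (d:ℝ) ≤ 2 * z + 2 := by
    rw [hd, dPar]
    push_cast
    rw [← ht, ← hz]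
    have := (Nat.ceil_lt_add_one hz0).le
    linarith
  set m := (midJ n ε).card with hm
  have hmle : (m:ℝ) ≤ 11 * R := by
    have h1 : (m:ℝ) ≤ (d:ℝ) + 1 := by exact_mod_cast midJ_card_le (n := n) ε
    have : (d:ℝ) ≤ 8 * R + 2 := by linarith
    linarith
  have hmge : R ≤ (m:ℝ) := by
    by_cases hcase : dPar n ε < n
    · have hd2 : 2 ≤ dPar n ε := by
        have : (2:ℝ) ≤ (d:ℝ) := by linarith
        exact_mod_cast this
      have := midJ_card_ge hcase hd2
      have hdm : (d:ℝ) ≤ (m:ℝ) := by exact_mod_cast this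
      linarith
    · push_neg at hcase
      have hmeq : m = n + 1 := by
        rw [hm, midJ_eq_range hcase, Finset.card_range]
      have hsn : s ≤ (n:ℝ) := by
        have h1 : 1/ε ≤ (n:ℝ) := by
          rw [div_le_iff₀ hε0]
          rw [div_le_iff₀ hn0] at hε1
          linarith
        calc s = Real.log (1/ε) := hs
          _ ≤ Real.log (n:ℝ) := Real.log_le_log (by linarith) h1
          _ ≤ (n:ℝ) := Real.log_le_self (by linarith)
      have : R ≤ (n:ℝ) := by
        calc R ≤ Real.sqrt ((n:ℝ) * (n:ℝ)) := Real.sqrt_le_sqrt (by nlinarith)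
          _ = (n:ℝ) := Real.sqrt_mul_self (by linarith)
      rw [hmeq]
      push_cast
      linarith
  have hm0 : (0:ℝ) < (m:ℝ) := lt_of_lt_of_le hR0 hmge
  rw [prYinA_eq A hA x hx, ← hm]
  exact final_ineq (score_nonneg x A) hR0 hm0 hmle hmge
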